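/- Let M ≥ 1, C > 0, G ≥ 0, η > 0, T ≥ 1, and let g_1, …, g_T ∈ ℝ^M with ‖g_t‖_∞ ≤ G for all t. Define the sequences μ_t^+, μ_t^− ∈ ℝ^M by μ_1^+ = μ_1^− = (C/M, …, C/M) and, for 1 ≤ t ≤ T and each coordinate i: Z_t = Σ_{i=1}^M ( [μ_t^+]_i exp(−ηC [g_t]_i) + [μ_t^−]_i exp(ηC [g_t]_i) ), [μ_{t+1}^+]_i = C [μ_t^+]_i exp(−ηC [g_t]_i) / Z_t, [μ_{t+1}^−]_i = C [μ_t^−]_i exp(ηC [g_t]_i) / Z_t; and set μ_t = μ_t^+ − μ_t^−. Then for every μ ∈ ℝ^M with ‖μ‖_1 ≤ C: Σ_{t=1}^T ⟨μ_t, g_t⟩ ≤ Σ_{t=1}^T ⟨μ, g_t⟩ + ln(2M)/η + η C^2 G^2 T / 2. -/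

import Mathlib

lemma chord_aux (θ v : ℝ) (h1 : -1 ≤ θ) (h2 : θ ≤ 1) :
    Real.exp (θ * v) ≤ (1 + θ)/2 * Real.exp v + (1 - θ)/2 * Real.exp (-v) := by
  have h := convexOn_exp.2 (Set.mem_univ v) (Set.mem_univ (-v))
    (show (0:ℝ) ≤ (1 + θ)/2 by linarith) (show (0:ℝ) ≤ (1 - θ)/2 by linarith)
    (show (1 + θ)/2 + (1 - θ)/2 = 1 by ring)
  simp only [smul_eq_mul] at h
  have : (1 + θ)/2 * v + (1 - θ)/2 * (-v) = θ * v := by ring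
  rwa [this] at h

lemma hoeff_aux (p : ℝ) (hp0 : 0 ≤ p) (hp1 : p ≤ 1) (u : ℝ) (hu : 0 ≤ u) :
    p * Real.exp u + (1 - p) * Real.exp (-u) ≤ Real.exp ((2 * p - 1) * u + u ^ 2 / 2) := by
  set q : ℝ := 1 - p with hqdef
  have hq0 : 0 ≤ q := by simp [hqdef]; linarith
  -- h x = p e^x + q e^{-x} > 0
  have hpos : ∀ x : ℝ, 0 < p * Real.exp x + q * Real.exp (-x) := by
    intro x
    have hA := Real.exp_pos x
    have hB := Real.exp_pos (-x)
    have h1 : p * (Real.exp x - min (Real.exp x) (Real.exp (-x))) ≥ 0 :=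
      mul_nonneg hp0 (by simp [min_le_left])
    have h2 : q * (Real.exp (-x) - min (Real.exp x) (Real.exp (-x))) ≥ 0 :=
      mul_nonneg hq0 (by simp [min_le_right])
    have hm : 0 < min (Real.exp x) (Real.exp (-x)) := lt_min hA hB
    nlinarith
  have hh : ∀ x : ℝ, HasDerivAt (fun x => p * Real.exp x + q * Real.exp (-x))
      (p * Real.exp x - q * Real.exp (-x)) x := by
    intro x
    have h1 := (Real.hasDerivAt_exp x).const_mul p
    have h2 := ((Real.hasDerivAt_exp (-x)).comp x (hasDerivAt_neg x)).const_mul q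
    exact (h1.add h2).congr_deriv (by ring)
  have hh' : ∀ x : ℝ, HasDerivAt (fun x => p * Real.exp x - q * Real.exp (-x))
      (p * Real.exp x + q * Real.exp (-x)) x := by
    intro x
    have h1 := (Real.hasDerivAt_exp x).const_mul p
    have h2 := ((Real.hasDerivAt_exp (-x)).comp x (hasDerivAt_neg x)).const_mul q
    exact (h1.sub h2).congr_deriv (by ring)
  -- ψ = φ'
  set ψ : ℝ → ℝ := fun x => (2 * p - 1) + x -
      (p * Real.exp x - q * Real.exp (-x)) / (p * Real.exp x + q * Real.exp (-x)) with hψ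
  have hψderiv : ∀ x : ℝ, HasDerivAt ψ
      (1 - ((p * Real.exp x + q * Real.exp (-x)) * (p * Real.exp x + q * Real.exp (-x)) -
        (p * Real.exp x - q * Real.exp (-x)) * (p * Real.exp x - q * Real.exp (-x))) /
        (p * Real.exp x + q * Real.exp (-x)) ^ 2) x := by
    intro x
    have hd := (hh' x).div (hh x) (hpos x).ne'
    have hc : HasDerivAt (fun x : ℝ => (2 * p - 1) + x) 1 x := by
      simpa using (hasDerivAt_id x).const_add (2 * p - 1)
    exact hc.sub hd
  have hψmono : Monotone ψ := by
    apply monotone_of_hasDerivAt_nonneg hψderiv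
    intro x
    have hA := Real.exp_pos x
    have hB := Real.exp_pos (-x)
    have hAB : Real.exp x * Real.exp (-x) = 1 := by
      rw [← Real.exp_add]; simp
    have hnum : (p * Real.exp x + q * Real.exp (-x)) * (p * Real.exp x + q * Real.exp (-x)) -
        (p * Real.exp x - q * Real.exp (-x)) * (p * Real.exp x - q * Real.exp (-x)) = 4 * p * q := by
      have : (p * Real.exp x + q * Real.exp (-x)) * (p * Real.exp x + q * Real.exp (-x)) -
        (p * Real.exp x - q * Real.exp (-x)) * (p * Real.exp x - q * Real.exp (-x)) =
        4 * p * q * (Real.exp x * Real.exp (-x)) := by ring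
      rw [this, hAB]; ring
    have hsq : 0 < (p * Real.exp x + q * Real.exp (-x)) ^ 2 := by
      have := hpos x; positivity
    have hge : 4 * p * q ≤ (p * Real.exp x + q * Real.exp (-x)) ^ 2 := by
      nlinarith [sq_nonneg (p * Real.exp x - q * Real.exp (-x)), hAB]
    simp only [Pi.zero_apply]
    rw [hnum, sub_nonneg, div_le_one hsq]
    exact hge
  have hψ0 : ψ 0 = 0 := by
    simp only [hψ, Real.exp_zero, neg_zero, mul_one]
    field_simp [hqdef]
    ring
  set φ : ℝ → ℝ := fun x => (2 * p - 1) * x + x ^ 2 / 2 -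
      Real.log (p * Real.exp x + q * Real.exp (-x)) with hφdef
  have hφderiv : ∀ x : ℝ, HasDerivAt φ (ψ x) x := by
    intro x
    have h1 : HasDerivAt (fun x : ℝ => (2 * p - 1) * x) (2 * p - 1) x := by
      simpa using (hasDerivAt_id x).const_mul (2 * p - 1)
    have h2 : HasDerivAt (fun x : ℝ => x ^ 2 / 2) x x := by
      have := (hasDerivAt_pow 2 x).div_const 2
      simpa using this
    have h3 := (hh x).log (hpos x).ne'
    exact (h1.add h2).sub h3
  have hφmono : MonotoneOn φ (Set.Ici (0:ℝ)) := by
    apply monotoneOn_of_hasDerivWithinAt_nonneg (convex_Ici 0)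
      (fun x _ => (hφderiv x).continuousAt.continuousWithinAt)
      (fun x _ => (hφderiv x).hasDerivWithinAt)
    intro x hx
    rw [interior_Ici] at hx
    have : ψ 0 ≤ ψ x := hψmono (le_of_lt hx)
    rw [hψ0] at this
    exact this
  have hφ0 : φ 0 = 0 := by
    simp [hφdef, hqdef]
  have hφu : 0 ≤ φ u := by
    have := hφmono (Set.self_mem_Ici) (Set.mem_Ici.2 hu) hu
    rw [hφ0] at this
    exact this
  have hlog : Real.log (p * Real.exp u + q * Real.exp (-u)) ≤ (2 * p - 1) * u + u ^ 2 / 2 := by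
    simp only [hφdef] at hφu
    linarith
  calc p * Real.exp u + q * Real.exp (-u)
      = Real.exp (Real.log (p * Real.exp u + q * Real.exp (-u))) := (Real.exp_log (hpos u)).symm
    _ ≤ Real.exp ((2 * p - 1) * u + u ^ 2 / 2) := Real.exp_le_exp.2 hlog
open Matrix

set_option maxHeartbeats 1000000 in
/-- regret of the EG± mirror descent solver, Algorithm 2: the iterates
`μ_t = μ_t⁺ − μ_t⁻` of the exponentiated gradient algorithm with positive and negative
weights over the dual space `{μ : ‖μ‖₁ ≤ C}` satisfy the regret bound
`∑_t ⟨μ_t, g_t⟩ ≤ ∑_t ⟨μ, g_t⟩ + ln(2M)/η + ηC²G²T/2`. -/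
theorem stmt15 (M : ℕ) (hM : 1 ≤ M) (C G η : ℝ) (hC : 0 < C) (hG : 0 ≤ G) (hη : 0 < η)
    (T : ℕ) (hT : 1 ≤ T)
    (g : ℕ → Fin M → ℝ) (hg : ∀ t < T, ∀ i, |g t i| ≤ G)
    (μp μm : ℕ → Fin M → ℝ)
    (hinit : ∀ i, μp 0 i = C / M ∧ μm 0 i = C / M)
    (hrecp : ∀ t < T, ∀ i, μp (t + 1) i =
      C * μp t i * Real.exp (-(η * C * g t i)) /
        (∑ j, (μp t j * Real.exp (-(η * C * g t j)) + μm t j * Real.exp (η * C * g t j))))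
    (hrecm : ∀ t < T, ∀ i, μm (t + 1) i =
      C * μm t i * Real.exp (η * C * g t i) /
        (∑ j, (μp t j * Real.exp (-(η * C * g t j)) + μm t j * Real.exp (η * C * g t j)))) :
    ∀ μ : Fin M → ℝ, (∑ i, |μ i|) ≤ C →
      ∑ t ∈ Finset.range T, (μp t - μm t) ⬝ᵥ g t ≤
        ∑ t ∈ Finset.range T, μ ⬝ᵥ g t +
          Real.log (2 * M) / η + η * C ^ 2 * G ^ 2 * T / 2 := by
  intro μ hμ
  haveI : Nonempty (Fin M) := ⟨⟨0, hM⟩⟩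
  have hMR : (0:ℝ) < M := by exact_mod_cast hM
  have hlog2M : (0:ℝ) ≤ Real.log (2 * M) := by
    apply Real.log_nonneg
    have : (1:ℝ) ≤ (M:ℝ) := by exact_mod_cast hM
    linarith
  by_cases hG0 : G = 0
  · subst hG0
    have hzero : ∀ t < T, ∀ i, g t i = 0 := fun t ht i => abs_nonpos_iff.mp (hg t ht i)
    have h1 : ∑ t ∈ Finset.range T, (μp t - μm t) ⬝ᵥ g t = 0 :=
      Finset.sum_eq_zero fun t ht => by
        simp [dotProduct, hzero t (Finset.mem_range.1 ht)]
    have h2 : ∑ t ∈ Finset.range T, μ ⬝ᵥ g t = 0 :=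
      Finset.sum_eq_zero fun t ht => by
        simp [dotProduct, hzero t (Finset.mem_range.1 ht)]
    rw [h1, h2]
    have := div_nonneg hlog2M hη.le
    linarith
  have hGpos : 0 < G := lt_of_le_of_ne hG (Ne.symm hG0)
  set u : ℝ := η * C * G with hu
  have hupos : 0 < u := by positivity
  obtain ⟨Z, hZdef⟩ : ∃ Z : ℕ → ℝ, ∀ t, Z t =
      ∑ j, (μp t j * Real.exp (-(η * C * g t j)) + μm t j * Real.exp (η * C * g t j)) :=
    ⟨_, fun t => rfl⟩
  obtain ⟨D, hDdef⟩ : ∃ D : ℕ → ℝ, ∀ t, D t = ∑ i, (μp t i - μm t i) * g t i :=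
    ⟨_, fun t => rfl⟩
  obtain ⟨N, hNdef⟩ : ∃ N : ℕ → ℝ, ∀ t, N t = ∑ i, (μp t i + μm t i) := ⟨_, fun t => rfl⟩
  obtain ⟨S, hSdef⟩ : ∃ S : Fin M → ℝ, ∀ i, S i = ∑ t ∈ Finset.range T, g t i :=
    ⟨_, fun i => rfl⟩
  have hrecp' : ∀ t < T, ∀ i, μp (t + 1) i =
      C * μp t i * Real.exp (-(η * C * g t i)) / Z t := fun t ht i => by
    rw [hZdef]; exact hrecp t ht i
  have hrecm' : ∀ t < T, ∀ i, μm (t + 1) i =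
      C * μm t i * Real.exp (η * C * g t i) / Z t := fun t ht i => by
    rw [hZdef]; exact hrecm t ht i
  -- positivity of iterates
  have hpos : ∀ t, t ≤ T → ∀ i, 0 < μp t i ∧ 0 < μm t i := by
    intro t
    induction t with
    | zero =>
      intro _ i
      constructor
      · rw [(hinit i).1]; positivity
      · rw [(hinit i).2]; positivity
    | succ n ih =>
      intro hle i
      have hn : n < T := hle
      have hZp : 0 < Z n := by
        rw [hZdef]
        apply Finset.sum_pos _ Finset.univ_nonempty
        intro j _
        have h1 := (ih (le_of_lt hn) j).1
        have h2 := (ih (le_of_lt hn) j).2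
        positivity
      constructor
      · rw [hrecp' n hn i]
        have := (ih (le_of_lt hn) i).1
        positivity
      · rw [hrecm' n hn i]
        have := (ih (le_of_lt hn) i).2
        positivity
  have hZpos : ∀ t, t < T → 0 < Z t := by
    intro t ht
    rw [hZdef]
    apply Finset.sum_pos _ Finset.univ_nonempty
    intro j _
    have h1 := (hpos t ht.le j).1
    have h2 := (hpos t ht.le j).2
    positivity
  have hNpos : ∀ t, t ≤ T → 0 < N t := by
    intro t ht
    rw [hNdef]
    apply Finset.sum_pos _ Finset.univ_nonempty
    intro j _
    have h1 := (hpos t ht j).1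
    have h2 := (hpos t ht j).2
    positivity
  -- mass
  have hmass : ∀ t, t < T → N (t + 1) = C := by
    intro t ht
    have hZp := hZpos t ht
    rw [hNdef]
    have hper : ∀ i : Fin M, μp (t+1) i + μm (t+1) i =
        C * (μp t i * Real.exp (-(η*C*g t i)) + μm t i * Real.exp (η*C*g t i)) / Z t := by
      intro i; rw [hrecp' t ht i, hrecm' t ht i]; ring
    rw [Finset.sum_congr rfl (fun i _ => hper i), ← Finset.sum_div, ← Finset.mul_sum,
      ← hZdef t, mul_div_assoc, div_self hZp.ne', mul_one]
  have hmass0 : N 0 = 2 * C := by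
    rw [hNdef]
    have hper : ∀ i : Fin M, μp 0 i + μm 0 i = 2 * C / M := fun i => by
      rw [(hinit i).1, (hinit i).2]; ring
    rw [Finset.sum_congr rfl (fun i _ => hper i), Finset.sum_const, Finset.card_univ,
      Fintype.card_fin, nsmul_eq_mul]
    field_simp
  have hNT : N T = C := by
    obtain ⟨T', rfl⟩ : ∃ T', T = T' + 1 := ⟨T - 1, by omega⟩
    exact hmass T' (by omega)
  have hD0 : D 0 = 0 := by
    rw [hDdef]
    apply Finset.sum_eq_zero
    intro i _
    rw [(hinit i).1, (hinit i).2]; ring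
  have hDb : ∀ t, t < T → |D t| ≤ N t * G := by
    intro t ht
    rw [hDdef, hNdef, Finset.sum_mul]
    refine (Finset.abs_sum_le_sum_abs _ _).trans (Finset.sum_le_sum ?_)
    intro i _
    obtain ⟨h1, h2⟩ := hpos t ht.le i
    have hgi := hg t ht i
    rw [abs_mul]
    have habs : |μp t i - μm t i| ≤ μp t i + μm t i :=
      abs_le.2 ⟨by linarith, by linarith⟩
    exact mul_le_mul habs hgi (abs_nonneg _) (by linarith)
  -- one-step log bound
  have hstep : ∀ t, t < T →
      Real.log (Z t) ≤ Real.log (N t) - η * C * D t / N t + u ^ 2 / 2 := by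
    intro t ht
    have hNp := hNpos t ht.le
    have hZp := hZpos t ht
    have hDbt := hDb t ht
    obtain ⟨hDb1, hDb2⟩ := abs_le.1 hDbt
    have hchord : Z t ≤ (N t / 2 - D t / (2*G)) * Real.exp u
        + (N t / 2 + D t / (2*G)) * Real.exp (-u) := by
      have hper : ∀ i : Fin M,
          μp t i * Real.exp (-(η*C*g t i)) + μm t i * Real.exp (η*C*g t i) ≤
          ((μp t i + μm t i)/2 - ((μp t i - μm t i)*g t i)/(2*G)) * Real.exp u +
          ((μp t i + μm t i)/2 + ((μp t i - μm t i)*g t i)/(2*G)) * Real.exp (-u) := by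
        intro i
        obtain ⟨h1, h2⟩ := hpos t ht.le i
        obtain ⟨hg1, hg2⟩ := abs_le.1 (hg t ht i)
        have hθ1 : -1 ≤ g t i / G := by
          rw [le_div_iff₀ hGpos]; linarith
        have hθ2 : g t i / G ≤ 1 := (div_le_one hGpos).2 (by linarith)
        have hc1 := chord_aux (-(g t i / G)) u (by linarith) (by linarith)
        have hc2 := chord_aux (g t i / G) u hθ1 hθ2
        have he1 : (-(g t i / G)) * u = -(η*C*g t i) := by
          rw [hu]; field_simp
        have he2 : (g t i / G) * u = η*C*g t i := by
          rw [hu]; field_simp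
        rw [he1] at hc1
        rw [he2] at hc2
        have hsum := add_le_add (mul_le_mul_of_nonneg_left hc1 h1.le)
          (mul_le_mul_of_nonneg_left hc2 h2.le)
        refine hsum.trans (le_of_eq ?_)
        field_simp
        ring
      have e1 : ∑ i, ((μp t i + μm t i)/2 - ((μp t i - μm t i)*g t i)/(2*G))
          = N t / 2 - D t / (2*G) := by
        rw [Finset.sum_sub_distrib, ← Finset.sum_div, ← Finset.sum_div, ← hNdef, ← hDdef]
      have e2 : ∑ i, ((μp t i + μm t i)/2 + ((μp t i - μm t i)*g t i)/(2*G))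
          = N t / 2 + D t / (2*G) := by
        rw [Finset.sum_add_distrib, ← Finset.sum_div, ← Finset.sum_div, ← hNdef, ← hDdef]
      calc Z t = ∑ i, (μp t i * Real.exp (-(η*C*g t i)) + μm t i * Real.exp (η*C*g t i)) :=
            hZdef t
        _ ≤ ∑ i, (((μp t i + μm t i)/2 - ((μp t i - μm t i)*g t i)/(2*G)) * Real.exp u +
            ((μp t i + μm t i)/2 + ((μp t i - μm t i)*g t i)/(2*G)) * Real.exp (-u)) :=
            Finset.sum_le_sum (fun i _ => hper i)
        _ = (N t / 2 - D t / (2*G)) * Real.exp u + (N t / 2 + D t / (2*G)) * Real.exp (-u) := by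
            rw [Finset.sum_add_distrib, ← Finset.sum_mul, ← Finset.sum_mul, e1, e2]
    set pp : ℝ := (N t / 2 - D t / (2*G)) / N t with hpp
    have hA0 : 0 ≤ N t / 2 - D t / (2*G) := by
      rw [sub_nonneg, div_le_div_iff₀ (by positivity) (by positivity)]
      nlinarith
    have hp0 : 0 ≤ pp := div_nonneg hA0 hNp.le
    have hp1 : pp ≤ 1 := by
      rw [hpp, div_le_one hNp]
      have hh2 : -(N t) / 2 ≤ D t / (2*G) := by
        rw [div_le_div_iff₀ (by norm_num) (by positivity)]
        nlinarith
      linarith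
    have hhh := hoeff_aux pp hp0 hp1 u hupos.le
    have hmul := mul_le_mul_of_nonneg_left hhh hNp.le
    have hA : N t * (pp * Real.exp u + (1 - pp) * Real.exp (-u)) =
        (N t / 2 - D t / (2*G)) * Real.exp u + (N t / 2 + D t / (2*G)) * Real.exp (-u) := by
      rw [hpp]; field_simp; ring
    have hB : (2 * pp - 1) * u + u ^ 2 / 2 = -(η * C * D t / N t) + u ^ 2 / 2 := by
      rw [hpp, hu]; field_simp; ring
    rw [hA, hB] at hmul
    have hZleq : Z t ≤ N t * Real.exp (-(η * C * D t / N t) + u ^ 2 / 2) :=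
      hchord.trans hmul
    have hlog := Real.log_le_log hZp hZleq
    rw [Real.log_mul hNp.ne' (Real.exp_ne_zero _), Real.log_exp] at hlog
    linarith
  -- summed upper bound
  have key : ∑ t ∈ Finset.range T, (Real.log (Z t) + η * D t) ≤
      (T:ℝ) * (Real.log C + u ^ 2 / 2) + Real.log 2 := by
    have hsplit : Finset.range T = insert 0 (Finset.Ico 1 T) := by
      ext x
      simp only [Finset.mem_range, Finset.mem_insert, Finset.mem_Ico]
      omega
    have h0T : 0 < T := hT
    have h0 : Real.log (Z 0) + η * D 0 ≤ Real.log C + u ^ 2 / 2 + Real.log 2 := by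
      have hs := hstep 0 h0T
      rw [hmass0, hD0] at hs
      have hl2 : Real.log (2 * C) = Real.log 2 + Real.log C :=
        Real.log_mul two_ne_zero hC.ne'
      rw [hl2] at hs
      simp only [mul_zero, zero_div] at hs
      rw [hD0, mul_zero, add_zero]
      linarith
    have hrest : ∑ t ∈ Finset.Ico 1 T, (Real.log (Z t) + η * D t) ≤
        ((T:ℝ) - 1) * (Real.log C + u ^ 2 / 2) := by
      calc ∑ t ∈ Finset.Ico 1 T, (Real.log (Z t) + η * D t)
          ≤ ∑ _t ∈ Finset.Ico 1 T, (Real.log C + u ^ 2 / 2) := by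
            apply Finset.sum_le_sum
            intro t htmem
            obtain ⟨ht1, ht2⟩ := Finset.mem_Ico.1 htmem
            obtain ⟨s, rfl⟩ : ∃ s, t = s + 1 := ⟨t - 1, by omega⟩
            have hs := hstep (s+1) ht2
            rw [hmass s (by omega)] at hs
            have hcc : η * C * D (s+1) / C = η * D (s+1) := by
              field_simp
            rw [hcc] at hs
            linarith
        _ = ((T:ℝ) - 1) * (Real.log C + u ^ 2 / 2) := by
            rw [Finset.sum_const, Nat.card_Ico, nsmul_eq_mul]
            congr 1
            push_cast [Nat.cast_sub hT]
            ring
    rw [hsplit, Finset.sum_insert (by simp)]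
    linarith
  -- telescoping lower bounds
  have htelp : ∀ i : Fin M, ∀ t, t ≤ T → Real.log (μp t i) =
      Real.log (C / M) + ∑ s ∈ Finset.range t,
        (Real.log C - η * C * g s i - Real.log (Z s)) := by
    intro i t
    induction t with
    | zero => intro _; simp [(hinit i).1]
    | succ n ih =>
      intro h
      have hn : n < T := h
      have h1 := (hpos n hn.le i).1
      have hZp := hZpos n hn
      rw [Finset.sum_range_succ, hrecp' n hn i,
        Real.log_div (by positivity : (0:ℝ) < C * μp n i * Real.exp (-(η*C*g n i))).ne' hZp.ne',
        Real.log_mul (by positivity : (0:ℝ) < C * μp n i).ne' (Real.exp_ne_zero _),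
        Real.log_mul hC.ne' h1.ne', Real.log_exp, ih (le_of_lt hn)]
      ring
  have htelm : ∀ i : Fin M, ∀ t, t ≤ T → Real.log (μm t i) =
      Real.log (C / M) + ∑ s ∈ Finset.range t,
        (Real.log C + η * C * g s i - Real.log (Z s)) := by
    intro i t
    induction t with
    | zero => intro _; simp [(hinit i).2]
    | succ n ih =>
      intro h
      have hn : n < T := h
      have h1 := (hpos n hn.le i).2
      have hZp := hZpos n hn
      rw [Finset.sum_range_succ, hrecm' n hn i,
        Real.log_div (by positivity : (0:ℝ) < C * μm n i * Real.exp (η*C*g n i)).ne' hZp.ne',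
        Real.log_mul (by positivity : (0:ℝ) < C * μm n i).ne' (Real.exp_ne_zero _),
        Real.log_mul hC.ne' h1.ne', Real.log_exp, ih (le_of_lt hn)]
      ring
  -- μp T i ≤ C and μm T i ≤ C
  have hle : ∀ i : Fin M, μp T i ≤ C ∧ μm T i ≤ C := by
    intro i
    have hsum : μp T i + μm T i ≤ N T := by
      rw [hNdef]
      exact Finset.single_le_sum (f := fun j => μp T j + μm T j)
        (fun j _ => (add_pos (hpos T le_rfl j).1 (hpos T le_rfl j).2).le) (Finset.mem_univ i)
    rw [hNT] at hsum
    have h1 := (hpos T le_rfl i).1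
    have h2 := (hpos T le_rfl i).2
    exact ⟨by linarith, by linarith⟩
  have hsumexp : ∀ i : Fin M, ∀ c : ℝ, ∑ s ∈ Finset.range T,
      (Real.log C + c * g s i - Real.log (Z s)) =
      (T:ℝ) * Real.log C + c * S i - ∑ s ∈ Finset.range T, Real.log (Z s) := by
    intro i c
    rw [Finset.sum_sub_distrib, Finset.sum_add_distrib, Finset.sum_const,
      Finset.card_range, nsmul_eq_mul, ← Finset.mul_sum, ← hSdef]
  have hlogCM : Real.log (C / M) = Real.log C - Real.log M :=
    Real.log_div hC.ne' (by positivity)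
  have hlowp : ∀ i : Fin M, (T:ℝ) * Real.log C - Real.log M - η * C * S i ≤
      ∑ s ∈ Finset.range T, Real.log (Z s) := by
    intro i
    have h1 := htelp i T le_rfl
    have h2 : Real.log (μp T i) ≤ Real.log C := Real.log_le_log (hpos T le_rfl i).1 (hle i).1
    rw [h1] at h2
    have h3 : ∑ s ∈ Finset.range T, (Real.log C - η * C * g s i - Real.log (Z s)) =
        (T:ℝ) * Real.log C + (-(η*C)) * S i - ∑ s ∈ Finset.range T, Real.log (Z s) := by
      rw [← hsumexp i (-(η*C))]
      apply Finset.sum_congr rfl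
      intro s _
      ring
    rw [h3, hlogCM] at h2
    linarith
  have hlowm : ∀ i : Fin M, (T:ℝ) * Real.log C - Real.log M + η * C * S i ≤
      ∑ s ∈ Finset.range T, Real.log (Z s) := by
    intro i
    have h1 := htelm i T le_rfl
    have h2 : Real.log (μm T i) ≤ Real.log C := Real.log_le_log (hpos T le_rfl i).2 (hle i).2
    rw [h1, hsumexp i (η*C), hlogCM] at h2
    linarith
  -- combine
  have hlogsplit : Real.log (2 * (M:ℝ)) = Real.log 2 + Real.log M :=
    Real.log_mul two_ne_zero (by positivity)
  have hsumDsplit : ∑ t ∈ Finset.range T, (Real.log (Z t) + η * D t) =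
      (∑ t ∈ Finset.range T, Real.log (Z t)) + η * ∑ t ∈ Finset.range T, D t := by
    rw [Finset.sum_add_distrib, Finset.mul_sum]
  have hkey2 : ∀ i : Fin M, η * (∑ t ∈ Finset.range T, D t) ≤
      η * C * S i + Real.log (2 * M) + (T:ℝ) * u ^ 2 / 2 := by
    intro i
    have h1 := hlowp i
    have h2 := key
    rw [hsumDsplit] at h2
    rw [hlogsplit]
    linarith
  have hkey2' : ∀ i : Fin M, η * (∑ t ∈ Finset.range T, D t) ≤
      -(η * C * S i) + Real.log (2 * M) + (T:ℝ) * u ^ 2 / 2 := by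
    intro i
    have h1 := hlowm i
    have h2 := key
    rw [hsumDsplit] at h2
    rw [hlogsplit]
    linarith
  -- the comparator
  obtain ⟨i₀, -, hi₀⟩ := Finset.exists_max_image (Finset.univ : Finset (Fin M))
    (fun i => |S i|) Finset.univ_nonempty
  have hμS : -(C * |S i₀|) ≤ ∑ i, μ i * S i := by
    have h1 : |∑ i, μ i * S i| ≤ ∑ i, |μ i| * |S i| := by
      refine (Finset.abs_sum_le_sum_abs _ _).trans (le_of_eq ?_)
      exact Finset.sum_congr rfl fun i _ => abs_mul _ _
    have h2 : ∑ i, |μ i| * |S i| ≤ ∑ i, |μ i| * |S i₀| :=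
      Finset.sum_le_sum fun i _ => mul_le_mul_of_nonneg_left (hi₀ i (Finset.mem_univ i))
        (abs_nonneg _)
    have h3 : ∑ i, |μ i| * |S i₀| = (∑ i, |μ i|) * |S i₀| := (Finset.sum_mul _ _ _).symm
    have h4 : (∑ i, |μ i|) * |S i₀| ≤ C * |S i₀| :=
      mul_le_mul_of_nonneg_right hμ (abs_nonneg _)
    have h5 := neg_abs_le (∑ i, μ i * S i)
    linarith
  have hDkey : η * (∑ t ∈ Finset.range T, D t) ≤
      -(η * C * |S i₀|) + Real.log (2 * M) + (T:ℝ) * u ^ 2 / 2 := by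
    rcases le_or_gt 0 (S i₀) with h | h
    · have := hkey2' i₀
      rw [abs_of_nonneg h]
      exact this
    · have := hkey2 i₀
      rw [abs_of_neg h]
      linarith
  have hlhs : ∑ t ∈ Finset.range T, (μp t - μm t) ⬝ᵥ g t = ∑ t ∈ Finset.range T, D t := by
    apply Finset.sum_congr rfl
    intro t _
    rw [hDdef]
    simp [dotProduct]
  have hrhs : ∑ t ∈ Finset.range T, μ ⬝ᵥ g t = ∑ i, μ i * S i := by
    simp only [dotProduct]
    rw [Finset.sum_comm]
    exact Finset.sum_congr rfl fun i _ => by rw [hSdef, Finset.mul_sum]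
  rw [hlhs, hrhs]
  have hdivlog : η * (Real.log (2 * M) / η) = Real.log (2 * M) :=
    mul_div_cancel₀ _ hη.ne'
  have hu2 : (T:ℝ) * u ^ 2 / 2 = η * (η * C ^ 2 * G ^ 2 * T / 2) := by
    rw [hu]; ring
  have hfin : η * (∑ t ∈ Finset.range T, D t) ≤
      η * (∑ i, μ i * S i + Real.log (2 * M) / η + η * C ^ 2 * G ^ 2 * T / 2) := by
    rw [mul_add, mul_add, hdivlog]
    have hm := mul_le_mul_of_nonneg_left hμS hη.le
    linarith
  exact le_of_mul_le_mul_left hfin hη
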